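/- arXiv:1705.07795 — 5 statements merged into one kernel-verified Lean document; each statement's English description precedes it below -/
import Mathlib

section
/- Let f(x) = β·exp(x²/(2α)) for real α, β > 0. Then the Fenchel conjugate f*(y) = sup_x (xy − f(x)) satisfies f*(y) ≤ |y|·√(α·log(α·y²/β² + 1)) − β for all real y. -/
set_option maxHeartbeats 1000000 in
lemma fenchel_pointwise (α β : ℝ) (hα : 0 < α) (hβ : 0 < β) (y x : ℝ) :
    x * y - β * Real.exp (x ^ 2 / (2 * α)) ≤
      |y| * Real.sqrt (α * Real.log (α * y ^ 2 / β ^ 2 + 1)) - β := by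
  set L := Real.log (α * y ^ 2 / β ^ 2 + 1) with hLdef
  set s := Real.sqrt (α * L) with hsdef
  have harg : (0:ℝ) ≤ α * y ^ 2 / β ^ 2 := by positivity
  have hL0 : 0 ≤ L := Real.log_nonneg (by linarith)
  have hs2 : s ^ 2 = α * L := Real.sq_sqrt (by positivity)
  have hexp1 : 1 ≤ Real.exp (x ^ 2 / (2 * α)) :=
    Real.one_le_exp (by positivity)
  rcases eq_or_ne y 0 with rfl | hy
  · simp only [abs_zero, zero_mul, mul_zero]
    nlinarith [hexp1]
  · have hu : 0 < α * y ^ 2 / β ^ 2 := by positivity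
    have hL : 0 < L := Real.log_pos (by linarith)
    have hs : 0 < s := Real.sqrt_pos.2 (by positivity)
    set P := Real.exp (L / 2) with hPdef
    have hP1 : 1 ≤ P := Real.one_le_exp (by linarith)
    have hP0 : 0 < P := lt_of_lt_of_le one_pos hP1
    have hE2 : P ^ 2 = α * y ^ 2 / β ^ 2 + 1 := by
      rw [sq, ← Real.exp_add]
      have : L / 2 + L / 2 = L := by ring
      rw [this, hLdef, Real.exp_log (by linarith)]
    -- key coefficient inequality : α * |y| ≤ s * (β * P)
    have hlog : 1 - (α * y ^ 2 / β ^ 2 + 1)⁻¹ ≤ L := by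
      have h := Real.log_le_sub_one_of_pos
        (show (0:ℝ) < (α * y ^ 2 / β ^ 2 + 1)⁻¹ by positivity)
      rw [Real.log_inv] at h
      linarith
    have hkey : α * y ^ 2 ≤ L * (α * y ^ 2 + β ^ 2) := by
      have hv : (0:ℝ) < α * y ^ 2 / β ^ 2 + 1 := by linarith
      have hβ2 : (0:ℝ) < β ^ 2 := by positivity
      have h1 : (α * y ^ 2 / β ^ 2 + 1)⁻¹ = β ^ 2 / (α * y ^ 2 + β ^ 2) := by
        field_simp
      rw [h1] at hlog
      have hpos : (0:ℝ) < α * y ^ 2 + β ^ 2 := by positivity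
      have := mul_le_mul_of_nonneg_right hlog hpos.le
      rw [sub_mul, div_mul_cancel₀ _ hpos.ne'] at this
      linarith
    have h3 : α * |y| ≤ s * (β * P) := by
      have hsq : (α * |y|) ^ 2 ≤ (s * (β * P)) ^ 2 := by
        have : (s * (β * P)) ^ 2 = α * L * (β ^ 2 * (α * y ^ 2 / β ^ 2 + 1)) := by
          rw [mul_pow, mul_pow, hs2, hE2]
        rw [this]
        have hb : β ^ 2 * (α * y ^ 2 / β ^ 2 + 1) = α * y ^ 2 + β ^ 2 := by
          field_simp
        rw [hb, mul_pow, sq_abs]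
        nlinarith [hkey, hα]
      have h0a : 0 ≤ α * |y| := by positivity
      have h0b : 0 ≤ s * (β * P) := by positivity
      nlinarith [hsq, h0a, h0b]
    have hxy : x * y ≤ |x| * |y| := by
      calc x * y ≤ |x * y| := le_abs_self _
        _ = |x| * |y| := abs_mul x y
    rcases le_or_gt |x| s with hcase | hcase
    · -- easy case
      have : x * y ≤ s * |y| :=
        le_trans hxy (mul_le_mul_of_nonneg_right hcase (abs_nonneg y))
      nlinarith [hexp1, this]
    · -- |x| > s, use convexity of exp
      have hzx : s ^ 2 ≤ x ^ 2 := by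
        have h := pow_le_pow_left₀ hs.le hcase.le 2
        rwa [sq_abs] at h
      have h1 : |x| * (2 * s) ≤ x ^ 2 + s ^ 2 := by
        nlinarith [sq_nonneg (|x| - s), sq_abs x]
      have h2 : P * (1 + (x ^ 2 / (2 * α) - L / 2)) ≤ Real.exp (x ^ 2 / (2 * α)) := by
        have hadd := Real.add_one_le_exp (x ^ 2 / (2 * α) - L / 2)
        have hmul := mul_le_mul_of_nonneg_left hadd hP0.le
        have heq : P * Real.exp (x ^ 2 / (2 * α) - L / 2) = Real.exp (x ^ 2 / (2 * α)) := by
          rw [hPdef, ← Real.exp_add]; ring_nf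
        rw [heq] at hmul
        linarith [hmul]
      -- clear denominators in h2 : P * (2α + (x² - s²)) ≤ 2α * exp
      have h2' : P * (2 * α + (x ^ 2 - s ^ 2)) ≤ 2 * α * Real.exp (x ^ 2 / (2 * α)) := by
        have hL' : L = s ^ 2 / α := by rw [hs2]; field_simp
        have := mul_le_mul_of_nonneg_right h2 (by linarith : (0:ℝ) ≤ 2 * α)
        rw [hL'] at this
        have hα' : α ≠ 0 := hα.ne'
        calc P * (2 * α + (x ^ 2 - s ^ 2))
            = P * (1 + (x ^ 2 / (2 * α) - s ^ 2 / α / 2)) * (2 * α) := by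
              field_simp
          _ ≤ Real.exp (x ^ 2 / (2 * α)) * (2 * α) := this
          _ = 2 * α * Real.exp (x ^ 2 / (2 * α)) := by ring
      -- combine
      have h4 : (x ^ 2 - s ^ 2) * (α * |y|) ≤ (x ^ 2 - s ^ 2) * (s * (β * P)) :=
        mul_le_mul_of_nonneg_left h3 (by linarith)
      have ha := mul_le_mul_of_nonneg_left hxy (show (0:ℝ) ≤ 2 * s * α by positivity)
      have hb := mul_le_mul_of_nonneg_right h1 (show (0:ℝ) ≤ α * |y| by positivity)
      have h5 : 2 * s * α * (x * y) ≤ 2 * s * α * (s * |y|) + s * β * (P * (x ^ 2 - s ^ 2)) := by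
        linarith [ha, hb, h4]
      have h2'' := mul_le_mul_of_nonneg_left h2' (show (0:ℝ) ≤ s * β by positivity)
      have h6 : s * β * (P * (x ^ 2 - s ^ 2)) ≤
          2 * s * α * β * Real.exp (x ^ 2 / (2 * α)) - 2 * s * α * β * P := by
        linarith [h2'']
      have h7 : 2 * s * α * β ≤ 2 * s * α * β * P :=
        le_mul_of_one_le_right (by positivity) hP1
      have hfin : 2 * s * α * (x * y - β * Real.exp (x ^ 2 / (2 * α))) ≤
          2 * s * α * (s * |y| - β) := by linarith [h5, h6, h7]
      have hpos : (0:ℝ) < 2 * s * α := by positivity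
      have := le_of_mul_le_mul_left (by linarith [hfin] :
        2 * s * α * (x * y - β * Real.exp (x ^ 2 / (2 * α))) ≤ 2 * s * α * (s * |y| - β)) hpos
      linarith [this]

theorem fenchel_conjugate_exp_bound (α β : ℝ) (hα : 0 < α) (hβ : 0 < β) (y : ℝ) :
    (⨆ x : ℝ, x * y - β * Real.exp (x ^ 2 / (2 * α))) ≤
      |y| * Real.sqrt (α * Real.log (α * y ^ 2 / β ^ 2 + 1)) - β := by
  exact ciSup_le fun x => fenchel_pointwise α β hα hβ y x
end

section
/- For all real x, log(1 + (exp(x) − 1)/(exp(x) + 1)) ≥ x/2 − x²/8. -/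
theorem log_one_add_tanh_ge (x : ℝ) :
    Real.log (1 + (Real.exp x - 1) / (Real.exp x + 1)) ≥ x / 2 - x ^ 2 / 8 := by
  have hE : (0:ℝ) < Real.exp x + 1 := by positivity
  have h1 : 1 + (Real.exp x - 1) / (Real.exp x + 1) = 2 * Real.exp x / (Real.exp x + 1) := by
    field_simp; ring
  rw [h1, ge_iff_le, Real.le_log_iff_exp_le (by positivity), le_div_iff₀ hE]
  have hc : Real.exp x + 1 = Real.exp (x/2) * (Real.exp (x/2) + Real.exp (-(x/2))) := by
    rw [mul_add, ← Real.exp_add, ← Real.exp_add]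
    norm_num
  have hcosh : Real.exp (x/2) + Real.exp (-(x/2)) ≤ 2 * Real.exp (x^2/8) := by
    have h := Real.cosh_le_exp_half_sq (x/2)
    rw [Real.cosh_eq, show (x/2)^2/2 = x^2/8 by ring] at h
    linarith
  calc Real.exp (x/2 - x^2/8) * (Real.exp x + 1)
      = Real.exp (x/2 - x^2/8) * (Real.exp (x/2) * (Real.exp (x/2) + Real.exp (-(x/2)))) := by
        rw [hc]
    _ ≤ Real.exp (x/2 - x^2/8) * (Real.exp (x/2) * (2 * Real.exp (x^2/8))) := by
        gcongr
    _ = 2 * Real.exp x := by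
        rw [show Real.exp (x/2 - x^2/8) * (Real.exp (x/2) * (2 * Real.exp (x^2/8))) =
          2 * (Real.exp (x/2 - x^2/8) * Real.exp (x/2) * Real.exp (x^2/8)) by ring,
          ← Real.exp_add, ← Real.exp_add, show x/2 - x^2/8 + x/2 + x^2/8 = x by ring]
end

section
/- Under the setup of the recurrence lemma with a = 2: let Wealth_0 = L and Wealth_t = Wealth_{t-1}·(1 + β_t g_t) where β_t = (1/L)(2σ(2θ_{t-1}/(G_{t-1}+L)) − 1). Then for all T ≥ 0, Wealth_T ≥ L·exp(θ_T²/(2L(G_T+L)) − ∑_{j=1}^T |g_j|/(2(G_{j-1}+L))). -/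
open Real


lemma poly_key (L D g θ : ℝ) (hL : 0 < L) (hD : 2*L ≤ D) (hg0 : 0 ≤ g) (hgL : g ≤ L) :
    0 ≤ L*D*(D+g)^2 - g*(D-θ)^2*(D+g) - 2*L*θ*(D-θ)*(D+g) - L*g*(D-θ)^2 := by
  have hDpos : 0 < D := by linarith
  have hC : L*D ≤ (2*L-g)*(D+g) - L*g := by nlinarith
  have hCpos : (0:ℝ) < (2*L-g)*(D+g) - L*g := lt_of_lt_of_le (by positivity) hC
  have h4 : 0 ≤ 4*((2*L-g)*(D+g) - L*g)*
      (L*D*(D+g)^2 - g*(D-θ)^2*(D+g) - 2*L*θ*(D-θ)*(D+g) - L*g*(D-θ)^2) := by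
    calc (0:ℝ) ≤ (2*((2*L-g)*(D+g) - L*g)*(D-θ) - 2*L*D*(D+g))^2
          + 4*L*D*(D+g)^2*(((2*L-g)*(D+g) - L*g) - L*D) := by
          have h1 : (0:ℝ) ≤ (2*((2*L-g)*(D+g) - L*g)*(D-θ) - 2*L*D*(D+g))^2 := sq_nonneg _
          have h2 : (0:ℝ) ≤ 4*L*D*(D+g)^2*(((2*L-g)*(D+g) - L*g) - L*D) :=
            mul_nonneg (by positivity) (sub_nonneg.2 hC)
          linarith
      _ = 4*((2*L-g)*(D+g) - L*g)*
          (L*D*(D+g)^2 - g*(D-θ)^2*(D+g) - 2*L*θ*(D-θ)*(D+g) - L*g*(D-θ)^2) := by ring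
  exact (mul_nonneg_iff_of_pos_left (by linarith : (0:ℝ) < 4*((2*L-g)*(D+g) - L*g))).mp
    (by linarith)

lemma log_interp (x t : ℝ) (hx0 : 0 ≤ x) (hx1 : x ≤ 1) (ht : -1 < t) :
    x * Real.log (1+t) ≤ Real.log (1 + x*t) := by
  have h := strictConcaveOn_log_Ioi.concaveOn.2 (show (1:ℝ) ∈ Set.Ioi 0 by simp)
    (show (1+t) ∈ Set.Ioi (0:ℝ) by simp [Set.mem_Ioi]; linarith)
    (show (0:ℝ) ≤ 1-x by linarith) hx0 (by ring)
  simp only [smul_eq_mul, Real.log_one, mul_zero, zero_add] at h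
  calc x * Real.log (1+t) ≤ Real.log ((1-x) * 1 + x * (1+t)) := by linarith
    _ = Real.log (1 + x*t) := by ring_nf

lemma neg_one_lt_tanh (z : ℝ) : -1 < Real.tanh z := by
  rw [Real.tanh_eq_sinh_div_cosh, lt_div_iff₀ (Real.cosh_pos z)]
  nlinarith [Real.cosh_add_sinh z, Real.exp_pos z]

lemma tanh_lt_one (z : ℝ) : Real.tanh z < 1 := by
  rw [Real.tanh_eq_sinh_div_cosh, div_lt_iff₀ (Real.cosh_pos z)]
  nlinarith [Real.cosh_sub_sinh z, Real.exp_pos (-z)]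

lemma log_one_add_tanh (z : ℝ) : Real.log (1 + Real.tanh z) = z - Real.log (Real.cosh z) := by
  have hc := Real.cosh_pos z
  have h : 1 + Real.tanh z = Real.exp z / Real.cosh z := by
    rw [Real.tanh_eq_sinh_div_cosh, ← Real.cosh_add_sinh]; field_simp
  rw [h, Real.log_div (Real.exp_pos z).ne' hc.ne', Real.log_exp]

lemma log_cosh_le_sq (z : ℝ) : Real.log (Real.cosh z) ≤ z^2/2 :=
  (Real.log_le_log (Real.cosh_pos z) (Real.cosh_le_exp_half_sq z)).trans_eq (Real.log_exp _)

lemma step_pos (L D g θ : ℝ) (hL : 0 < L) (hD : 2*L ≤ D) (hg0 : 0 ≤ g) (hgL : g ≤ L) :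
    (θ+g)^2/(2*L*(D+g)) + ((θ+g)/(D+g))^2/2 - θ^2/(2*L*D) - (θ/D)^2/2 - g/(2*D)
      ≤ Real.log (1 + Real.tanh (θ/D) * (g/L)) := by
  have hDpos : 0 < D := by linarith
  have hDg : 0 < D + g := by linarith
  set t := Real.tanh (θ/D) with htdef
  have h1 : (g/L) * Real.log (1+t) ≤ Real.log (1 + (g/L)*t) :=
    log_interp (g/L) t (by positivity) (by rw [div_le_one hL]; exact hgL) (_root_.neg_one_lt_tanh _)
  have h2 : θ/D - (θ/D)^2/2 ≤ Real.log (1+t) := by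
    rw [htdef, log_one_add_tanh]
    have := log_cosh_le_sq (θ/D)
    linarith
  have h3 : (g/L) * (θ/D - (θ/D)^2/2) ≤ (g/L) * Real.log (1+t) :=
    mul_le_mul_of_nonneg_left h2 (by positivity)
  have hkey := poly_key L D g θ hL hD hg0 hgL
  have h4 : (θ+g)^2/(2*L*(D+g)) + ((θ+g)/(D+g))^2/2 - θ^2/(2*L*D) - (θ/D)^2/2 - g/(2*D)
      ≤ (g/L) * (θ/D - (θ/D)^2/2) := by
    have hid : (g/L) * (θ/D - (θ/D)^2/2)
        - ((θ+g)^2/(2*L*(D+g)) + ((θ+g)/(D+g))^2/2 - θ^2/(2*L*D) - (θ/D)^2/2 - g/(2*D))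
        = g*(L*D*(D+g)^2 - g*(D-θ)^2*(D+g) - 2*L*θ*(D-θ)*(D+g) - L*g*(D-θ)^2)
          / (2*L*D^2*(D+g)^2) := by
      field_simp
      ring
    have hnn : 0 ≤ g*(L*D*(D+g)^2 - g*(D-θ)^2*(D+g) - 2*L*θ*(D-θ)*(D+g) - L*g*(D-θ)^2)
          / (2*L*D^2*(D+g)^2) := by
      apply div_nonneg (mul_nonneg hg0 hkey) (by positivity)
    linarith
  have hcomm : 1 + (g/L)*t = 1 + t*(g/L) := by ring
  rw [hcomm] at h1
  linarith


lemma sig_eq_tanh (z : ℝ) : 2 * (1 / (1 + Real.exp (-(2*z)))) - 1 = Real.tanh z := by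
  have h1 : Real.exp (-(2*z)) = Real.exp (-z) ^ 2 := by
    rw [← Real.exp_nat_mul]; ring_nf
  have h2 : Real.exp z * Real.exp (-z) = 1 := by
    rw [← Real.exp_add]; simp
  have hc := Real.cosh_pos z
  rw [Real.tanh_eq_sinh_div_cosh, Real.sinh_eq, Real.cosh_eq]
  have hp : (0:ℝ) < 1 + Real.exp (-(2*z)) := by positivity
  field_simp [h1]
  nlinarith [Real.exp_pos z, Real.exp_pos (-z)]



lemma step_signed (L D g θ : ℝ) (hL : 0 < L) (hD : 2*L ≤ D) (hg : |g| ≤ L) :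
    (θ+g)^2/(2*L*(D+|g|)) + ((θ+g)/(D+|g|))^2/2 - θ^2/(2*L*D) - (θ/D)^2/2 - |g|/(2*D)
      ≤ Real.log (1 + Real.tanh (θ/D) * (g/L)) := by
  rcases le_or_gt 0 g with hg0 | hg0
  · rw [abs_of_nonneg hg0]
    exact step_pos L D g θ hL hD hg0 ((abs_of_nonneg hg0) ▸ hg)
  · rw [abs_of_neg hg0]
    have h := step_pos L D (-g) (-θ) hL hD (by linarith) ((abs_of_neg hg0) ▸ hg)
    have e1 : 1 + Real.tanh (-θ/D) * (-g/L) = 1 + Real.tanh (θ/D) * (g/L) := by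
      rw [show (-θ)/D = -(θ/D) by ring, Real.tanh_neg]; ring
    rw [e1] at h
    calc (θ+g)^2/(2*L*(D + -g)) + ((θ+g)/(D + -g))^2/2 - θ^2/(2*L*D) - (θ/D)^2/2 - -g/(2*D)
        = (-θ + -g)^2/(2*L*(D + -g)) + ((-θ + -g)/(D + -g))^2/2
          - (-θ)^2/(2*L*D) - (-θ/D)^2/2 - -g/(2*D) := by ring_nf
      _ ≤ _ := h

lemma one_add_tanh_mul_pos (z x : ℝ) (hx : |x| ≤ 1) : 0 < 1 + Real.tanh z * x := by
  have h1 := _root_.neg_one_lt_tanh z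
  have h2 := _root_.tanh_lt_one z
  have h3 := abs_le.1 hx
  nlinarith [mul_nonneg (by linarith : (0:ℝ) ≤ 1 + Real.tanh z) (by linarith : (0:ℝ) ≤ 1 + x),
    mul_nonneg (by linarith : (0:ℝ) ≤ 1 - Real.tanh z) (by linarith : (0:ℝ) ≤ 1 - x)]



theorem cocob_wealth_lower_bound (L : ℝ) (hL : 0 < L)
    (g : ℕ → ℝ) (hg : ∀ t, |g t| ≤ L)
    (θ G : ℕ → ℝ)
    (hθ : ∀ t, θ t = ∑ j ∈ Finset.Icc 1 t, g j)
    (hG : ∀ t, G t = L + ∑ j ∈ Finset.Icc 1 t, |g j|)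
    (β : ℕ → ℝ)
    (hβ : ∀ t, β t = (1 / L) *
      (2 * (1 / (1 + Real.exp (-(2 * θ (t - 1) / (G (t - 1) + L))))) - 1))
    (W : ℕ → ℝ) (hW0 : W 0 = L)
    (hWt : ∀ t ≥ 1, W t = W (t - 1) * (1 + β t * g t))
    (T : ℕ) :
    W T ≥ L * Real.exp (θ T ^ 2 / (2 * L * (G T + L)) -
      ∑ j ∈ Finset.Icc 1 T, |g j| / (2 * (G (j - 1) + L))) := by
  -- basic facts
  have hGL : ∀ t, L ≤ G t := by
    intro t
    rw [hG t]
    have : (0:ℝ) ≤ ∑ j ∈ Finset.Icc 1 t, |g j| :=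
      Finset.sum_nonneg (fun j _ => abs_nonneg _)
    linarith
  have hGrec : ∀ t : ℕ, G (t+1) = G t + |g (t+1)| := by
    intro t
    rw [hG (t+1), hG t, Finset.sum_Icc_succ_top (Nat.one_le_iff_ne_zero.2 (Nat.succ_ne_zero t))]
    ring
  have hθrec : ∀ t : ℕ, θ (t+1) = θ t + g (t+1) := by
    intro t
    rw [hθ (t+1), hθ t, Finset.sum_Icc_succ_top (Nat.one_le_iff_ne_zero.2 (Nat.succ_ne_zero t))]
  -- strengthened invariant
  have key : ∀ t : ℕ, W t ≥ L * Real.exp (θ t ^ 2 / (2 * L * (G t + L)) + (θ t / (G t + L))^2/2 -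
      ∑ j ∈ Finset.Icc 1 t, |g j| / (2 * (G (j - 1) + L))) := by
    intro t
    induction t with
    | zero =>
      have hθ0 : θ 0 = 0 := by
        rw [hθ 0]; simp
      rw [hW0, hθ0]
      simp
    | succ t ih =>
      have hD : 2*L ≤ G t + L := by have := hGL t; linarith
      have hDpos : 0 < G t + L := by linarith
      set D := G t + L with hDdef
      -- wealth recurrence
      have hrec := hWt (t+1) (Nat.le_add_left 1 t)
      have hsub : (t+1) - 1 = t := rfl
      rw [hsub] at hrec
      -- rewrite β
      have hbt : β (t+1) * g (t+1) = Real.tanh (θ t / D) * (g (t+1) / L) := by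
        rw [hβ (t+1)]
        rw [hsub]
        rw [show 2 * θ t / (G t + L) = 2 * (θ t / (G t + L)) by ring]
        rw [sig_eq_tanh (θ t / (G t + L))]
        field_simp
        rw [hDdef]; ring
      -- step bound
      have habs : |g (t+1) / L| ≤ 1 := by
        rw [abs_div, abs_of_pos hL, div_le_one hL]; exact hg (t+1)
      have hpos : 0 < 1 + Real.tanh (θ t / D) * (g (t+1) / L) :=
        one_add_tanh_mul_pos _ _ habs
      have hstep := step_signed L D (g (t+1)) (θ t) hL hD (hg (t+1))
      have hexp : Real.exp ((θ t + g (t+1))^2/(2*L*(D+|g (t+1)|))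
            + ((θ t + g (t+1))/(D+|g (t+1)|))^2/2
            - θ t ^2/(2*L*D) - (θ t/D)^2/2 - |g (t+1)|/(2*D))
          ≤ 1 + Real.tanh (θ t / D) * (g (t+1) / L) := by
        rw [← Real.exp_log hpos]
        exact Real.exp_le_exp.2 hstep
      -- combine
      have hWpos : 0 ≤ W t := le_trans (by positivity) ih
      have hmul : (L * Real.exp (θ t ^ 2 / (2 * L * (G t + L)) + (θ t / (G t + L))^2/2 -
            ∑ j ∈ Finset.Icc 1 t, |g j| / (2 * (G (j - 1) + L)))) *
          Real.exp ((θ t + g (t+1))^2/(2*L*(D+|g (t+1)|))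
            + ((θ t + g (t+1))/(D+|g (t+1)|))^2/2
            - θ t ^2/(2*L*D) - (θ t/D)^2/2 - |g (t+1)|/(2*D))
          ≤ W t * (1 + Real.tanh (θ t / D) * (g (t+1) / L)) :=
        mul_le_mul ih hexp (Real.exp_pos _).le hWpos
      rw [hrec, hbt]
      refine le_trans (le_of_eq ?_) hmul
      rw [mul_assoc L, ← Real.exp_add]
      congr 1
      have hsum : ∑ j ∈ Finset.Icc 1 (t+1), |g j| / (2 * (G (j - 1) + L))
          = (∑ j ∈ Finset.Icc 1 t, |g j| / (2 * (G (j - 1) + L)))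
            + |g (t+1)| / (2 * (G t + L)) := by
        rw [Finset.sum_Icc_succ_top (Nat.one_le_iff_ne_zero.2 (Nat.succ_ne_zero t))]
        norm_num
      rw [hsum, hθrec t, hGrec t]
      rw [show G t + |g (t+1)| + L = D + |g (t+1)| by rw [hDdef]; ring]
      set S0 := ∑ j ∈ Finset.Icc 1 t, |g j| / (2 * (G (j - 1) + L)) with hS0
      rw [hDdef]
      ring
  have hfinal := key T
  refine le_trans ?_ hfinal
  have : θ T ^ 2 / (2 * L * (G T + L)) -
      ∑ j ∈ Finset.Icc 1 T, |g j| / (2 * (G (j - 1) + L))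
      ≤ θ T ^ 2 / (2 * L * (G T + L)) + (θ T / (G T + L))^2/2 -
      ∑ j ∈ Finset.Icc 1 T, |g j| / (2 * (G (j - 1) + L)) := by
    have : 0 ≤ (θ T / (G T + L))^2/2 := by positivity
    linarith
  exact mul_le_mul_of_nonneg_left (Real.exp_le_exp.2 this) hL.le
end

section
/- Under the COCOB wealth bound, combining with the telescoping inequality ∑_{j=1}^T |g_j|/(G_{j-1}+L) ≤ ∑_{j=1}^T |g_j|/G_j ≤ ln(G_T/L) gives Wealth_T ≥ L·exp(θ_T²/(2L(G_T+L)) − (1/2)·ln(G_T/L)) = L·√(L/G_T)·exp(θ_T²/(2L(G_T+L))). -/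
set_option maxHeartbeats 1000000

private lemma exp_merge (c a b : ℝ) : c * Real.exp a * Real.exp b = c * Real.exp (a + b) := by
  rw [mul_assoc, ← Real.exp_add]

private lemma poly_step (L t v G : ℝ) (hL : 0 < L) (hv0 : 0 ≤ v) (hvL : v ≤ L)
    (hLG : L ≤ G) :
    (t + v) ^ 2 * (G + v + 2 * L) / (2 * L * (G + v + L) ^ 2)
      - t ^ 2 * (G + 2 * L) / (2 * L * (G + L) ^ 2) - v / (2 * (G + v)) ≤
    v * t / (L * (G + L)) - v * t ^ 2 / (2 * L * (G + L) ^ 2) := by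
  have hG0 : 0 < G := lt_of_lt_of_le hL hLG
  have hGv : 0 < G + v := by linarith
  have hGL : 0 < G + L := by linarith
  have hB : 0 < G + v + L := by linarith
  have hinner : v * (G + v) ≤ L * (G + L) := mul_le_mul hvL (by linarith) (by linarith) hL.le
  have hinner2 : 0 < 2 * L * (G + L) - v * (G + v) := by nlinarith [mul_pos hL hGL]
  have hα : 0 < 2 * (G + v) * (2 * L * (G + L) - v * (G + v)) :=
    mul_pos (by linarith) hinner2
  have hEin : 0 ≤ G * (G + L) ^ 2 * (G + 2 * L)
      + 2 * v * (2 * G ^ 3 + 6 * G ^ 2 * L + 5 * G * L ^ 2 + L ^ 3)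
      + v ^ 2 * (6 * G ^ 2 + 12 * G * L + 5 * L ^ 2) + 4 * v ^ 3 * (G + L) + v ^ 4 := by
    have h1 : 0 ≤ G * (G + L) ^ 2 * (G + 2 * L) :=
      mul_nonneg (mul_nonneg hG0.le (sq_nonneg _)) (by linarith)
    have h2 : 0 ≤ 2 * v * (2 * G ^ 3 + 6 * G ^ 2 * L + 5 * G * L ^ 2 + L ^ 3) := by
      have h2' : (0:ℝ) ≤ 2 * G ^ 3 + 6 * G ^ 2 * L + 5 * G * L ^ 2 + L ^ 3 := by positivity
      nlinarith
    have h3 : 0 ≤ v ^ 2 * (6 * G ^ 2 + 12 * G * L + 5 * L ^ 2) := by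
      have h3' : (0:ℝ) ≤ 6 * G ^ 2 + 12 * G * L + 5 * L ^ 2 := by positivity
      nlinarith [sq_nonneg v]
    have h4 : 0 ≤ 4 * v ^ 3 * (G + L) := by
      have h4' : 0 ≤ v ^ 3 := by positivity
      nlinarith
    have h5 : 0 ≤ v ^ 4 := by positivity
    linarith
  rw [← sub_nonneg]
  have key : v * t / (L * (G + L)) - v * t ^ 2 / (2 * L * (G + L) ^ 2)
      - ((t + v) ^ 2 * (G + v + 2 * L) / (2 * L * (G + v + L) ^ 2)
        - t ^ 2 * (G + 2 * L) / (2 * L * (G + L) ^ 2) - v / (2 * (G + v)))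
      = v * ((2 * (2 * (G + v) * (2 * L * (G + L) - v * (G + v))) * t
              + 4 * (G + L) * (G + v) * (v ^ 2 + (G + L) * v - L * (G + L))) ^ 2
            + (L - v) * (16 * L * (G + L) ^ 2 *
              (G * (G + L) ^ 2 * (G + 2 * L)
                + 2 * v * (2 * G ^ 3 + 6 * G ^ 2 * L + 5 * G * L ^ 2 + L ^ 3)
                + v ^ 2 * (6 * G ^ 2 + 12 * G * L + 5 * L ^ 2)
                + 4 * v ^ 3 * (G + L) + v ^ 4)))
        / (16 * (2 * (G + v) * (2 * L * (G + L) - v * (G + v)))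
            * (L * (G + L) ^ 2 * (G + v) * (G + v + L) ^ 2)) := by
    rw [eq_div_iff (mul_pos (by linarith : (0:ℝ) < 16 * (2 * (G + v) * (2 * L * (G + L) - v * (G + v)))) (by positivity)).ne']
    field_simp
    ring
  rw [key]
  apply div_nonneg
  · apply mul_nonneg hv0
    apply add_nonneg (sq_nonneg _)
    apply mul_nonneg (by linarith)
    have h16 : (0:ℝ) ≤ 16 * L * (G + L) ^ 2 := by positivity
    exact mul_nonneg h16 hEin
  · have hden : (0:ℝ) < L * (G + L) ^ 2 * (G + v) * (G + v + L) ^ 2 := by positivity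
    have h16α : (0:ℝ) < 16 * (2 * (G + v) * (2 * L * (G + L) - v * (G + v))) := by linarith
    exact (mul_pos h16α hden).le

private lemma chord (x c : ℝ) (hc : |c| ≤ 1) :
    Real.exp (c * x - |c| * x ^ 2 / 2) ≤
      1 + c * (2 * (1 / (1 + Real.exp (-(2 * x)))) - 1) := by
  have hc1 : c ≤ 1 := le_trans (le_abs_self c) hc
  have hc1' : -1 ≤ c := neg_le_of_abs_le hc
  have hcoshpos := Real.cosh_pos x
  have hexp2 : Real.exp (-(2 * x)) = Real.exp (-x) * Real.exp (-x) := by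
    rw [← Real.exp_add]; ring_nf
  have hcosh : Real.cosh x = (Real.exp x + Real.exp (-x)) / 2 := Real.cosh_eq x
  have hexpx := Real.exp_pos x
  have hexpnx := Real.exp_pos (-x)
  have hprod : Real.exp x * Real.exp (-x) = 1 := by
    rw [← Real.exp_add]; simp
  have hd : (0:ℝ) < 1 + Real.exp (-(2 * x)) := by positivity
  have h1s : 1 + (2 * (1 / (1 + Real.exp (-(2 * x)))) - 1) = Real.exp x / Real.cosh x := by
    rw [hexp2, hcosh]
    rw [hexp2] at hd
    have hab : 0 < Real.exp x + Real.exp (-x) := by positivity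
    field_simp
    linear_combination (-2 * Real.exp (-x)) * hprod
  have h2s : 1 - (2 * (1 / (1 + Real.exp (-(2 * x)))) - 1) = Real.exp (-x) / Real.cosh x := by
    rw [hexp2, hcosh]
    rw [hexp2] at hd
    have hab : 0 < Real.exp x + Real.exp (-x) := by positivity
    field_simp
    linear_combination (2 * Real.exp (-x)) * hprod
  have hlogcosh : Real.log (Real.cosh x) ≤ x ^ 2 / 2 := by
    have h := Real.log_le_log hcoshpos (Real.cosh_le_exp_half_sq x)
    rwa [Real.log_exp] at h
  have h1pos : (0:ℝ) < Real.exp x / Real.cosh x := div_pos hexpx hcoshpos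
  have h2pos : (0:ℝ) < Real.exp (-x) / Real.cosh x := div_pos hexpnx hcoshpos
  have hlog1 : Real.log (Real.exp x / Real.cosh x) = x - Real.log (Real.cosh x) := by
    rw [Real.log_div (Real.exp_ne_zero x) hcoshpos.ne', Real.log_exp]
  have hlog2 : Real.log (Real.exp (-x) / Real.cosh x) = -x - Real.log (Real.cosh x) := by
    rw [Real.log_div (Real.exp_ne_zero (-x)) hcoshpos.ne', Real.log_exp]
  have hs1pos : (0:ℝ) < 1 + (2 * (1 / (1 + Real.exp (-(2 * x)))) - 1) := by
    rw [h1s]; exact h1pos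
  have hs2pos : (0:ℝ) < 1 - (2 * (1 / (1 + Real.exp (-(2 * x)))) - 1) := by
    rw [h2s]; exact h2pos
  rcases le_or_gt 0 c with hc0 | hc0
  · rw [abs_of_nonneg hc0]
    have hgm := Real.geom_mean_le_arith_mean2_weighted
      (by linarith : (0:ℝ) ≤ 1 - c) hc0 zero_le_one hs1pos.le (by ring)
    rw [Real.one_rpow, one_mul] at hgm
    have hrpow : (1 + (2 * (1 / (1 + Real.exp (-(2 * x)))) - 1)) ^ c
        = Real.exp (Real.log (1 + (2 * (1 / (1 + Real.exp (-(2 * x)))) - 1)) * c) :=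
      Real.rpow_def_of_pos hs1pos c
    have hlogval : Real.log (1 + (2 * (1 / (1 + Real.exp (-(2 * x)))) - 1))
        = x - Real.log (Real.cosh x) := by rw [h1s, hlog1]
    have harg : c * x - c * x ^ 2 / 2
        ≤ Real.log (1 + (2 * (1 / (1 + Real.exp (-(2 * x)))) - 1)) * c := by
      rw [hlogval]
      nlinarith [mul_le_mul_of_nonneg_left hlogcosh hc0]
    calc Real.exp (c * x - c * x ^ 2 / 2)
        ≤ Real.exp (Real.log (1 + (2 * (1 / (1 + Real.exp (-(2 * x)))) - 1)) * c) :=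
          Real.exp_le_exp.mpr harg
      _ = (1 + (2 * (1 / (1 + Real.exp (-(2 * x)))) - 1)) ^ c := hrpow.symm
      _ ≤ (1 - c) * 1 + c * (1 + (2 * (1 / (1 + Real.exp (-(2 * x)))) - 1)) := hgm
      _ = 1 + c * (2 * (1 / (1 + Real.exp (-(2 * x)))) - 1) := by ring
  · rw [abs_of_neg hc0]
    have hd0 : 0 ≤ -c := by linarith
    have hgm := Real.geom_mean_le_arith_mean2_weighted
      (by linarith : (0:ℝ) ≤ 1 - -c) hd0 zero_le_one hs2pos.le (by ring)
    rw [Real.one_rpow, one_mul] at hgm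
    have hrpow : (1 - (2 * (1 / (1 + Real.exp (-(2 * x)))) - 1)) ^ (-c)
        = Real.exp (Real.log (1 - (2 * (1 / (1 + Real.exp (-(2 * x)))) - 1)) * (-c)) :=
      Real.rpow_def_of_pos hs2pos (-c)
    have hlogval : Real.log (1 - (2 * (1 / (1 + Real.exp (-(2 * x)))) - 1))
        = -x - Real.log (Real.cosh x) := by rw [h2s, hlog2]
    have harg : c * x - -c * x ^ 2 / 2
        ≤ Real.log (1 - (2 * (1 / (1 + Real.exp (-(2 * x)))) - 1)) * (-c) := by
      rw [hlogval]
      nlinarith [mul_le_mul_of_nonneg_left hlogcosh hd0]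
    calc Real.exp (c * x - -c * x ^ 2 / 2)
        ≤ Real.exp (Real.log (1 - (2 * (1 / (1 + Real.exp (-(2 * x)))) - 1)) * (-c)) :=
          Real.exp_le_exp.mpr harg
      _ = (1 - (2 * (1 / (1 + Real.exp (-(2 * x)))) - 1)) ^ (-c) := hrpow.symm
      _ ≤ (1 - -c) * 1 + -c * (1 - (2 * (1 / (1 + Real.exp (-(2 * x)))) - 1)) := hgm
      _ = 1 + c * (2 * (1 / (1 + Real.exp (-(2 * x)))) - 1) := by ring

private lemma step_ineq (L th g1 G1 : ℝ) (hL : 0 < L) (hg : |g1| ≤ L) (hLG : L ≤ G1) :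
    Real.exp ((th + g1) ^ 2 * (G1 + |g1| + 2 * L) / (2 * L * (G1 + |g1| + L) ^ 2)
        - Real.log ((G1 + |g1|) / L) / 2
        - (th ^ 2 * (G1 + 2 * L) / (2 * L * (G1 + L) ^ 2) - Real.log (G1 / L) / 2)) ≤
      1 + 1 / L * (2 * (1 / (1 + Real.exp (-(2 * th / (G1 + L))))) - 1) * g1 := by
  have hG0 : 0 < G1 := lt_of_lt_of_le hL hLG
  have hGL : 0 < G1 + L := by linarith
  have habs0 : (0:ℝ) ≤ |g1| := abs_nonneg g1
  have hGv : 0 < G1 + |g1| := by linarith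
  have hc : |g1 / L| ≤ 1 := by
    rw [abs_div, abs_of_pos hL]
    exact (div_le_one hL).mpr hg
  have key := chord (th / (G1 + L)) (g1 / L) hc
  have e1 : 1 + g1 / L * (2 * (1 / (1 + Real.exp (-(2 * (th / (G1 + L)))))) - 1)
      = 1 + 1 / L * (2 * (1 / (1 + Real.exp (-(2 * th / (G1 + L))))) - 1) * g1 := by
    rw [mul_div_assoc]
    ring
  rw [← e1]
  refine le_trans (Real.exp_le_exp.mpr ?_) key
  have habs : |g1 / L| = |g1| / L := by rw [abs_div, abs_of_pos hL]
  rw [habs]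
  have hlog : |g1| / (G1 + |g1|) ≤ Real.log ((G1 + |g1|) / L) - Real.log (G1 / L) := by
    have h1 : Real.log ((G1 + |g1|) / L) = Real.log (G1 + |g1|) - Real.log L :=
      Real.log_div hGv.ne' hL.ne'
    have h2 : Real.log (G1 / L) = Real.log G1 - Real.log L := Real.log_div hG0.ne' hL.ne'
    have h3 : Real.log ((G1 + |g1|) / G1) = Real.log (G1 + |g1|) - Real.log G1 :=
      Real.log_div hGv.ne' hG0.ne'
    have h4 := Real.one_sub_inv_le_log_of_pos (show (0:ℝ) < (G1 + |g1|) / G1 from div_pos hGv hG0)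
    have h5 : ((G1 + |g1|) / G1)⁻¹ = G1 / (G1 + |g1|) := by rw [inv_div]
    have h6 : 1 - G1 / (G1 + |g1|) = |g1| / (G1 + |g1|) := by field_simp; ring
    rw [h5, h6] at h4
    linarith
  have hpoly : (th + g1) ^ 2 * (G1 + |g1| + 2 * L) / (2 * L * (G1 + |g1| + L) ^ 2)
      - th ^ 2 * (G1 + 2 * L) / (2 * L * (G1 + L) ^ 2) - |g1| / (2 * (G1 + |g1|))
      ≤ g1 * th / (L * (G1 + L)) - |g1| * th ^ 2 / (2 * L * (G1 + L) ^ 2) := by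
    rcases abs_cases g1 with ⟨ha, hb⟩ | ⟨ha, hb⟩
    · rw [ha]
      have h := poly_step L th g1 G1 hL (by linarith) (by rw [← ha]; exact hg) hLG
      linear_combination h
    · rw [ha]
      have h := poly_step L (-th) (-g1) G1 hL (by linarith)
        (by rw [show -g1 = |g1| from ha.symm]; exact hg) hLG
      linear_combination h
  have er : g1 / L * (th / (G1 + L)) - |g1| / L * (th / (G1 + L)) ^ 2 / 2
      = g1 * th / (L * (G1 + L)) - |g1| * th ^ 2 / (2 * L * (G1 + L) ^ 2) := by
    field_simp
  rw [er]
  have hhalf : |g1| / (2 * (G1 + |g1|)) = |g1| / (G1 + |g1|) / 2 := by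
    rw [div_div]
    ring_nf
  linarith

theorem cocob_wealth_sqrt_bound (L : ℝ) (hL : 0 < L)
    (g : ℕ → ℝ) (hg : ∀ t, |g t| ≤ L)
    (θ G : ℕ → ℝ)
    (hθ : ∀ t, θ t = ∑ j ∈ Finset.Icc 1 t, g j)
    (hG : ∀ t, G t = L + ∑ j ∈ Finset.Icc 1 t, |g j|)
    (β : ℕ → ℝ)
    (hβ : ∀ t, β t = (1 / L) *
      (2 * (1 / (1 + Real.exp (-(2 * θ (t - 1) / (G (t - 1) + L))))) - 1))
    (W : ℕ → ℝ)
    (hW : ∀ T, W T = L * ∏ t ∈ Finset.Icc 1 T, (1 + β t * g t))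
    (T : ℕ) :
    W T ≥ L * Real.sqrt (L / G T) *
      Real.exp (θ T ^ 2 / (2 * L * (G T + L))) := by
  have hGL : ∀ t, L ≤ G t := by
    intro t
    rw [hG t]
    have h : (0:ℝ) ≤ ∑ j ∈ Finset.Icc 1 t, |g j| :=
      Finset.sum_nonneg fun j _ => abs_nonneg (g j)
    linarith
  have key : ∀ n : ℕ, L * Real.exp (θ n ^ 2 * (G n + 2 * L) / (2 * L * (G n + L) ^ 2)
      - Real.log (G n / L) / 2) ≤ W n := by
    intro n
    induction n with
    | zero =>
      have h1 : θ 0 = 0 := by rw [hθ]; simp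
      have h2 : G 0 = L := by rw [hG]; simp
      have h3 : W 0 = L := by rw [hW]; simp
      rw [h1, h2, h3, div_self hL.ne', Real.log_one]
      norm_num
    | succ n ih =>
      have h1 : θ (n + 1) = θ n + g (n + 1) := by
        rw [hθ (n + 1), hθ n, Finset.sum_Icc_succ_top (Nat.le_add_left 1 n)]
      have h2 : G (n + 1) = G n + |g (n + 1)| := by
        rw [hG (n + 1), hG n, Finset.sum_Icc_succ_top (Nat.le_add_left 1 n)]
        ring
      have h3 : W (n + 1) = W n * (1 + β (n + 1) * g (n + 1)) := by
        rw [hW (n + 1), hW n, Finset.prod_Icc_succ_top (Nat.le_add_left 1 n)]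
        ring
      have h4 : β (n + 1) = (1 / L) *
          (2 * (1 / (1 + Real.exp (-(2 * θ n / (G n + L))))) - 1) := by
        have h := hβ (n + 1)
        simpa using h
      have hstep := step_ineq L (θ n) (g (n + 1)) (G n) hL (hg (n + 1)) (hGL n)
      have hWpos : 0 ≤ W n := le_trans (by positivity) ih
      rw [h3, h1, h2]
      calc L * Real.exp ((θ n + g (n + 1)) ^ 2 * (G n + |g (n + 1)| + 2 * L) /
              (2 * L * (G n + |g (n + 1)| + L) ^ 2) - Real.log ((G n + |g (n + 1)|) / L) / 2)
          = (L * Real.exp (θ n ^ 2 * (G n + 2 * L) / (2 * L * (G n + L) ^ 2)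
              - Real.log (G n / L) / 2)) *
            Real.exp ((θ n + g (n + 1)) ^ 2 * (G n + |g (n + 1)| + 2 * L) /
              (2 * L * (G n + |g (n + 1)| + L) ^ 2) - Real.log ((G n + |g (n + 1)|) / L) / 2
              - (θ n ^ 2 * (G n + 2 * L) / (2 * L * (G n + L) ^ 2)
                - Real.log (G n / L) / 2)) := by
            rw [exp_merge]
            congr 2
            ring
        _ ≤ W n * (1 + β (n + 1) * g (n + 1)) := by
            apply mul_le_mul ih ?_ (Real.exp_pos _).le hWpos
            rw [h4]
            exact hstep
  have hk := key T
  have hGT : 0 < G T := lt_of_lt_of_le hL (hGL T)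
  have hGTL : 0 < G T + L := by linarith
  have hsqrt : Real.sqrt (L / G T) = Real.exp (-(Real.log (G T / L) / 2)) := by
    rw [show L / G T = (G T / L)⁻¹ by rw [inv_div], Real.sqrt_eq_rpow,
      Real.rpow_def_of_pos (by positivity), Real.log_inv]
    congr 1
    ring
  have hquad : θ T ^ 2 / (2 * L * (G T + L)) ≤
      θ T ^ 2 * (G T + 2 * L) / (2 * L * (G T + L) ^ 2) := by
    rw [div_le_div_iff₀ (by positivity) (by positivity)]
    nlinarith [sq_nonneg (θ T), mul_pos hL hGTL,
      mul_nonneg (mul_nonneg (sq_nonneg (θ T)) hL.le) hGTL.le,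
      mul_nonneg (mul_nonneg (mul_nonneg (sq_nonneg (θ T)) hL.le) hGTL.le) hL.le]
  rw [ge_iff_le, hsqrt]
  calc L * Real.exp (-(Real.log (G T / L) / 2)) * Real.exp (θ T ^ 2 / (2 * L * (G T + L)))
      = L * Real.exp (θ T ^ 2 / (2 * L * (G T + L)) - Real.log (G T / L) / 2) := by
        rw [exp_merge]
        congr 2
        ring
    _ ≤ L * Real.exp (θ T ^ 2 * (G T + 2 * L) / (2 * L * (G T + L) ^ 2)
          - Real.log (G T / L) / 2) := by
        apply mul_le_mul_of_nonneg_left (Real.exp_le_exp.mpr (by linarith)) hL.le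
    _ ≤ W T := hk
end

section
/- Let L > 0, θ ∈ ℝ, G ≥ L, and H(x) = L·exp(x²/(2L(G+L)) − c) with constant c ≤ (1/2)ln(G/L) satisfied by c = (1/2)ln(G/L). Then the Fenchel conjugate satisfies H*(w) ≤ |w|·√(L(G+L)·ln(1 + (G+L)²·w²/L²)) for all w ∈ ℝ. -/
theorem cocob_conjugate_bound (L G : ℝ) (hL : 0 < L) (hG : L ≤ G) (w : ℝ) :
    (⨆ x : ℝ, x * w -
        L * Real.exp (x ^ 2 / (2 * L * (G + L)) - (1 / 2) * Real.log (G / L))) ≤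
      |w| * Real.sqrt (L * (G + L) * Real.log (1 + (G + L) ^ 2 * w ^ 2 / L ^ 2)) := by
  have hGpos : 0 < G := lt_of_lt_of_le hL hG
  set A : ℝ := L * (G + L) with hA
  have hApos : 0 < A := by positivity
  set z : ℝ := (G + L) ^ 2 * w ^ 2 / L ^ 2 with hzdef
  have hz : 0 ≤ z := by positivity
  set c : ℝ := (1 / 2) * Real.log (G / L) with hc
  set β : ℝ := L * Real.exp (-c) with hβ
  have hβpos : 0 < β := by positivity
  have hβsq : β ^ 2 = L ^ 3 / G := by
    have he : Real.exp (-c) ^ 2 = L / G := by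
      rw [← Real.exp_nat_mul]
      have h2 : ((2:ℕ):ℝ) * (-c) = - Real.log (G / L) := by
        push_cast; rw [hc]; ring
      rw [h2, Real.exp_neg, Real.exp_log (by positivity), inv_div]
    calc β ^ 2 = L ^ 2 * Real.exp (-c) ^ 2 := by ring
      _ = L ^ 2 * (L / G) := by rw [he]
      _ = L ^ 3 / G := by ring
  set P : ℝ := Real.log (1 + z) with hP
  have hPnonneg : 0 ≤ P := Real.log_nonneg (by linarith)
  set s : ℝ := Real.sqrt (A * P) with hs
  have hsnn : 0 ≤ s := Real.sqrt_nonneg _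
  have hssq : s ^ 2 = A * P := Real.sq_sqrt (by positivity)
  have hsqz : Real.sqrt (1 + z) ^ 2 = 1 + z := Real.sq_sqrt (by linarith)
  have hsqznn : 0 ≤ Real.sqrt (1 + z) := Real.sqrt_nonneg _
  -- (1+z) log(1+z) ≥ z
  have hlogkey : z ≤ (1 + z) * P := by
    have h1 : Real.log ((1 + z)⁻¹) ≤ (1 + z)⁻¹ - 1 :=
      Real.log_le_sub_one_of_pos (by positivity)
    rw [Real.log_inv] at h1
    have h2 : 1 - (1 + z)⁻¹ ≤ P := by linarith
    have h3 : (1 - (1 + z)⁻¹) * (1 + z) = z := by field_simp; ring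
    nlinarith [mul_le_mul_of_nonneg_right h2 (by linarith : (0:ℝ) ≤ 1 + z)]
  -- key inequality : A * |w| ≤ β * s * sqrt (1+z)
  have key : A * |w| ≤ β * s * Real.sqrt (1 + z) := by
    have hsq : (A * |w|) ^ 2 ≤ (β * s * Real.sqrt (1 + z)) ^ 2 := by
      have expand : (β * s * Real.sqrt (1 + z)) ^ 2 = (L ^ 3 / G) * (A * P) * (1 + z) := by
        rw [mul_pow, mul_pow, hβsq, hssq, hsqz]
      have expand2 : (A * |w|) ^ 2 = A * A * w ^ 2 := by
        rw [mul_pow, sq_abs]; ring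
      rw [expand, expand2]
      have h4 : A ≤ L * (G + L) ^ 2 / G := by
        rw [hA, le_div_iff₀ hGpos]; nlinarith
      have step3 : A * A * w ^ 2 ≤ A * (L * (G + L) ^ 2 / G) * w ^ 2 :=
        mul_le_mul_of_nonneg_right (mul_le_mul_of_nonneg_left h4 hApos.le) (sq_nonneg w)
      have step2 : A * (L * (G + L) ^ 2 / G) * w ^ 2 = (L ^ 3 / G) * A * z := by
        rw [hzdef]; field_simp
      have step1 : (L ^ 3 / G) * A * z ≤ (L ^ 3 / G) * (A * P) * (1 + z) := by
        calc (L ^ 3 / G) * A * z ≤ (L ^ 3 / G) * A * ((1 + z) * P) :=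
              mul_le_mul_of_nonneg_left hlogkey (by positivity)
          _ = (L ^ 3 / G) * (A * P) * (1 + z) := by ring
      linarith
    have h5 := Real.sqrt_le_sqrt hsq
    rwa [Real.sqrt_sq (by positivity), Real.sqrt_sq (by positivity)] at h5
  -- exp(s^2/(2A)) = sqrt (1+z)
  have hexps : Real.exp (s ^ 2 / (2 * A)) = Real.sqrt (1 + z) := by
    have harg : s ^ 2 / (2 * A) = (1 / 2) * P := by
      rw [hssq]; field_simp
    have hsr : Real.sqrt (1 + z) = Real.exp ((1 / 2) * Real.log (1 + z)) := by
      rw [Real.sqrt_eq_rpow, Real.rpow_def_of_pos (by linarith)]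
      rw [mul_comm]
    rw [harg, hsr, hP]
  apply ciSup_le
  intro x
  have harg : x ^ 2 / (2 * L * (G + L)) = x ^ 2 / (2 * A) := by rw [hA]; ring_nf
  have hrw : L * Real.exp (x ^ 2 / (2 * L * (G + L)) - c) = β * Real.exp (x ^ 2 / (2 * A)) := by
    rw [harg, hβ, mul_assoc, ← Real.exp_add]
    congr 2
    ring
  rw [hrw]
  -- main pointwise bound: (|x| - s) * |w| ≤ β * exp(x^2/(2A))
  have main : (|x| - s) * |w| ≤ β * Real.exp (x ^ 2 / (2 * A)) := by
    rcases le_or_gt (|x|) s with hxs | hxs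
    · have h1 : (|x| - s) * |w| ≤ 0 := mul_nonpos_of_nonpos_of_nonneg (by linarith) (abs_nonneg w)
      have h2 : (0:ℝ) < β * Real.exp (x ^ 2 / (2 * A)) := by positivity
      linarith
    · -- |x| > s : tangent line bound
      have hxsle : (0:ℝ) ≤ |x| - s := by linarith
      have htangent : Real.exp (s ^ 2 / (2 * A)) * (1 + (x ^ 2 - s ^ 2) / (2 * A))
          ≤ Real.exp (x ^ 2 / (2 * A)) := by
        have h6 : 1 + (x ^ 2 - s ^ 2) / (2 * A) ≤ Real.exp ((x ^ 2 - s ^ 2) / (2 * A)) := by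
          have := Real.add_one_le_exp ((x ^ 2 - s ^ 2) / (2 * A)); linarith
        have h7 : Real.exp (x ^ 2 / (2 * A)) =
            Real.exp (s ^ 2 / (2 * A)) * Real.exp ((x ^ 2 - s ^ 2) / (2 * A)) := by
          rw [← Real.exp_add]; ring_nf
        rw [h7]
        exact mul_le_mul_of_nonneg_left h6 (Real.exp_pos _).le
      have hdiv : s * (|x| - s) / A ≤ (x ^ 2 - s ^ 2) / (2 * A) := by
        rw [div_le_div_iff₀ hApos (by linarith)]
        have hxabs : x ^ 2 = |x| ^ 2 := (sq_abs x).symm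
        have e1 : (0:ℝ) ≤ (|x| - s) ^ 2 := sq_nonneg _
        have e2 : (|x| - s) ^ 2 = |x| ^ 2 - 2 * (s * |x|) + s ^ 2 := by ring
        have h9 : 2 * s * (|x| - s) ≤ x ^ 2 - s ^ 2 := by
          have e3 : 2 * s * (|x| - s) = 2 * (s * |x|) - 2 * s ^ 2 := by ring
          linarith
        calc s * (|x| - s) * (2 * A) = (2 * s * (|x| - s)) * A := by ring
          _ ≤ (x ^ 2 - s ^ 2) * A := mul_le_mul_of_nonneg_right h9 hApos.le
      have hstep : Real.sqrt (1 + z) * (1 + s * (|x| - s) / A)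
          ≤ Real.exp (x ^ 2 / (2 * A)) := by
        calc Real.sqrt (1 + z) * (1 + s * (|x| - s) / A)
            ≤ Real.sqrt (1 + z) * (1 + (x ^ 2 - s ^ 2) / (2 * A)) :=
              mul_le_mul_of_nonneg_left (by linarith) hsqznn
          _ = Real.exp (s ^ 2 / (2 * A)) * (1 + (x ^ 2 - s ^ 2) / (2 * A)) := by rw [hexps]
          _ ≤ Real.exp (x ^ 2 / (2 * A)) := htangent
      have hmul : β * (Real.sqrt (1 + z) * (1 + s * (|x| - s) / A))
          ≤ β * Real.exp (x ^ 2 / (2 * A)) := mul_le_mul_of_nonneg_left hstep hβpos.le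
      have hexpand : β * (Real.sqrt (1 + z) * (1 + s * (|x| - s) / A))
          = β * Real.sqrt (1 + z) + (β * s * Real.sqrt (1 + z) / A) * (|x| - s) := by
        field_simp
      have hkey2 : |w| ≤ β * s * Real.sqrt (1 + z) / A := by
        rw [le_div_iff₀ hApos]
        calc |w| * A = A * |w| := mul_comm _ _
          _ ≤ β * s * Real.sqrt (1 + z) := key
      have h8 : (|x| - s) * |w| ≤ (|x| - s) * (β * s * Real.sqrt (1 + z) / A) :=
        mul_le_mul_of_nonneg_left hkey2 hxsle
      have hcomm : (|x| - s) * (β * s * Real.sqrt (1 + z) / A)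
          = (β * s * Real.sqrt (1 + z) / A) * (|x| - s) := mul_comm _ _
      have hb : (0:ℝ) ≤ β * Real.sqrt (1 + z) := by positivity
      linarith
  have hxw : x * w ≤ |x| * |w| := by
    calc x * w ≤ |x * w| := le_abs_self _
      _ = |x| * |w| := abs_mul x w
  have hring : |x| * |w| - (|x| - s) * |w| = s * |w| := by ring
  have hfin : x * w - β * Real.exp (x ^ 2 / (2 * A)) ≤ s * |w| := by linarith
  calc x * w - β * Real.exp (x ^ 2 / (2 * A)) ≤ s * |w| := hfin
    _ = |w| * Real.sqrt (L * (G + L) * Real.log (1 + (G + L) ^ 2 * w ^ 2 / L ^ 2)) := by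
        rw [hs, hA, hP, hzdef]; ring
end
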